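/- For all indices a, b : Fin n, one has Tr((δ_{ab} • B₀ − γ_a * {γ_b, B₀}) * (∑_{c : Fin n} {γ_c, B₀} * γ_c − 2 • B₀)) = (3/8) · Tr(1) · (δ_{ab} · ∑_{i,j,k} T_{ijk}² − 6 · ∑_{j,k} T_{ajk} T_{bjk}), where Tr(1) is the trace of the N×N identity matrix. (This is the quadratic-in-torsion contribution (1/8)(δ^{ab} T⁰_{ijk}T⁰_{ijk} − 6 T⁰_{ajk}T⁰_{bjk}) to the Einstein functional of the Dirac operator with totally antisymmetric torsion.) -/
import Mathlib


open Matrix BigOperators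

/-- The anticommutator {X, Y} = X*Y + Y*X of two matrices. -/
noncomputable def acomm {N : ℕ} (X Y : Matrix (Fin N) (Fin N) ℂ) : Matrix (Fin N) (Fin N) ℂ :=
  X * Y + Y * X

section
variable {n N : ℕ} (γ : Fin n → Matrix (Fin N) (Fin N) ℂ)
    (hγ : ∀ a b : Fin n, γ a * γ b + γ b * γ a
      = (2 * if a = b then (1:ℂ) else 0) • (1 : Matrix (Fin N) (Fin N) ℂ))
    (T : Fin n → Fin n → Fin n → ℝ)
    (hT1 : ∀ j k l : Fin n, T j k l = - T k j l)
    (hT2 : ∀ j k l : Fin n, T j k l = - T j l k)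

include hγ

lemma tr2 (k l : Fin n) :
    Matrix.trace (γ k * γ l) = (if k = l then (1:ℂ) else 0) * Matrix.trace (1 : Matrix (Fin N) (Fin N) ℂ) := by
  have h := congrArg Matrix.trace (hγ k l)
  simp only [trace_add, trace_smul, smul_eq_mul] at h
  rw [trace_mul_comm (γ l) (γ k)] at h
  linear_combination h / 2

lemma acomm3 (c j k l : Fin n) :
    γ c * (γ j * γ k * γ l) + γ j * γ k * γ l * γ c
      = (2 * if c = j then (1:ℂ) else 0) • (γ k * γ l)
        - (2 * if c = k then (1:ℂ) else 0) • (γ j * γ l)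
        + (2 * if c = l then (1:ℂ) else 0) • (γ j * γ k) := by
  have h1 := hγ c j
  have h2 := hγ c k
  have h3 := hγ c l
  calc γ c * (γ j * γ k * γ l) + γ j * γ k * γ l * γ c
      = (γ c * γ j + γ j * γ c) * (γ k * γ l) - γ j * ((γ c * γ k + γ k * γ c) * γ l)
        + (γ j * γ k) * (γ c * γ l + γ l * γ c) := by noncomm_ring
    _ = _ := by rw [h1, h2, h3]; simp [smul_mul_assoc, mul_smul_comm, mul_assoc]

lemma comm2 (a k l : Fin n) :
    γ a * (γ k * γ l) - γ k * γ l * γ a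
      = (2 * if a = k then (1:ℂ) else 0) • γ l - (2 * if a = l then (1:ℂ) else 0) • γ k := by
  have h1 := hγ a k
  have h2 := hγ a l
  calc γ a * (γ k * γ l) - γ k * γ l * γ a
      = (γ a * γ k + γ k * γ a) * γ l - γ k * (γ a * γ l + γ l * γ a) := by noncomm_ring
    _ = _ := by rw [h1, h2]; simp [smul_mul_assoc, mul_smul_comm]

lemma tr4 (k l p q : Fin n) :
    Matrix.trace (γ k * γ l * (γ p * γ q))
      = ((if k = l then (1:ℂ) else 0) * (if p = q then (1:ℂ) else 0)
        - (if k = p then (1:ℂ) else 0) * (if l = q then (1:ℂ) else 0)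
        + (if k = q then (1:ℂ) else 0) * (if l = p then (1:ℂ) else 0))
        * Matrix.trace (1 : Matrix (Fin N) (Fin N) ℂ) := by
  have h := congrArg Matrix.trace (acomm3 γ hγ k l p q)
  simp only [trace_add, trace_sub, trace_smul, smul_eq_mul] at h
  rw [trace_mul_comm (γ l * γ p * γ q) (γ k)] at h
  rw [tr2 γ hγ, tr2 γ hγ, tr2 γ hγ] at h
  have hassoc : γ k * (γ l * γ p * γ q) = γ k * γ l * (γ p * γ q) := by noncomm_ring
  rw [hassoc] at h
  linear_combination h / 2

include hT1 hT2

/-- {γ_c, B₀} = -(3i/4) ∑ T_{ckl} γ_k γ_l -/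
lemma hA (B₀ : Matrix (Fin N) (Fin N) ℂ)
    (hB : B₀ = (-(Complex.I / 8)) •
      ∑ j : Fin n, ∑ k : Fin n, ∑ l : Fin n, ((T j k l : ℂ)) • (γ j * γ k * γ l))
    (c : Fin n) :
    acomm (γ c) B₀ = (-(3*Complex.I/4)) • ∑ k : Fin n, ∑ l : Fin n,
      ((T c k l : ℂ)) • (γ k * γ l) := by
  rw [acomm, hB, mul_smul_comm, smul_mul_assoc, ← smul_add]
  have expand : γ c * (∑ j : Fin n, ∑ k : Fin n, ∑ l : Fin n, ((T j k l : ℂ)) • (γ j * γ k * γ l))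
      + (∑ j : Fin n, ∑ k : Fin n, ∑ l : Fin n, ((T j k l : ℂ)) • (γ j * γ k * γ l)) * γ c
      = ∑ j : Fin n, ∑ k : Fin n, ∑ l : Fin n,
          ((T j k l : ℂ)) • (γ c * (γ j * γ k * γ l) + (γ j * γ k * γ l) * γ c) := by
    simp only [Finset.mul_sum, Finset.sum_mul, mul_smul_comm, smul_mul_assoc, smul_add,
      ← Finset.sum_add_distrib]
  rw [expand]
  have step : ∀ j k l : Fin n,
      ((T j k l : ℂ)) • (γ c * (γ j * γ k * γ l) + (γ j * γ k * γ l) * γ c)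
        = (if c = j then ((2:ℂ) * (T j k l : ℂ)) • (γ k * γ l) else 0)
          - (if c = k then ((2:ℂ) * (T j k l : ℂ)) • (γ j * γ l) else 0)
          + (if c = l then ((2:ℂ) * (T j k l : ℂ)) • (γ j * γ k) else 0) := by
    intro j k l
    rw [acomm3 γ hγ c j k l]
    split_ifs <;> simp [smul_sub, smul_add, smul_smul] <;> module
  simp only [step]
  simp only [Finset.sum_add_distrib, Finset.sum_sub_distrib]
  have e1 : (∑ j : Fin n, ∑ k : Fin n, ∑ l : Fin n,
        (if c = j then ((2:ℂ) * (T j k l : ℂ)) • (γ k * γ l) else 0))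
      = ∑ k : Fin n, ∑ l : Fin n, ((2:ℂ) * (T c k l : ℂ)) • (γ k * γ l) := by
    rw [Finset.sum_comm]
    refine Finset.sum_congr rfl fun k _ => ?_
    rw [Finset.sum_comm]
    refine Finset.sum_congr rfl fun l _ => ?_
    simp
  have e2 : (∑ j : Fin n, ∑ k : Fin n, ∑ l : Fin n,
        (if c = k then ((2:ℂ) * (T j k l : ℂ)) • (γ j * γ l) else 0))
      = ∑ j : Fin n, ∑ l : Fin n, ((2:ℂ) * (T j c l : ℂ)) • (γ j * γ l) := by
    refine Finset.sum_congr rfl fun j _ => ?_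
    rw [Finset.sum_comm]
    refine Finset.sum_congr rfl fun l _ => ?_
    simp
  have e3 : (∑ j : Fin n, ∑ k : Fin n, ∑ l : Fin n,
        (if c = l then ((2:ℂ) * (T j k l : ℂ)) • (γ j * γ k) else 0))
      = ∑ j : Fin n, ∑ k : Fin n, ((2:ℂ) * (T j k c : ℂ)) • (γ j * γ k) := by
    refine Finset.sum_congr rfl fun j _ => ?_
    refine Finset.sum_congr rfl fun k _ => ?_
    simp
  rw [e1, e2, e3]
  have comb : (∑ x : Fin n, ∑ y : Fin n, ((2:ℂ) * (T c x y : ℂ)) • (γ x * γ y))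
      - (∑ x : Fin n, ∑ y : Fin n, ((2:ℂ) * (T x c y : ℂ)) • (γ x * γ y))
      + (∑ x : Fin n, ∑ y : Fin n, ((2:ℂ) * (T x y c : ℂ)) • (γ x * γ y))
      = ∑ x : Fin n, ∑ y : Fin n, (((2:ℂ) * (T c x y : ℂ)) • (γ x * γ y)
          - ((2:ℂ) * (T x c y : ℂ)) • (γ x * γ y)
          + ((2:ℂ) * (T x y c : ℂ)) • (γ x * γ y)) := by
    simp [Finset.sum_sub_distrib, Finset.sum_add_distrib]
  rw [comb]
  simp only [Finset.smul_sum]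
  refine Finset.sum_congr rfl fun x _ => ?_
  refine Finset.sum_congr rfl fun y _ => ?_
  have hx : ((T x c y : ℝ) : ℂ) = -((T c x y : ℝ) : ℂ) := by
    rw [hT1 x c y]; push_cast; ring
  have hy : ((T x y c : ℝ) : ℂ) = ((T c x y : ℝ) : ℂ) := by
    rw [hT2 x y c, hT1 x c y]; push_cast; ring
  rw [hx, hy]
  match_scalars <;> ring

lemma hS1 (B₀ : Matrix (Fin N) (Fin N) ℂ)
    (hB : B₀ = (-(Complex.I / 8)) •
      ∑ j : Fin n, ∑ k : Fin n, ∑ l : Fin n, ((T j k l : ℂ)) • (γ j * γ k * γ l)) :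
    ∑ c : Fin n, acomm (γ c) B₀ * γ c = (6:ℂ) • B₀ := by
  have h := hA γ hγ T hT1 hT2 B₀ hB
  simp only [h, smul_mul_assoc, Finset.sum_mul, smul_mul_assoc]
  rw [← Finset.smul_sum, hB, smul_smul]
  have reindex : (∑ c : Fin n, ∑ k : Fin n, ∑ l : Fin n, ((T c k l : ℂ)) • (γ k * γ l * γ c))
      = ∑ j : Fin n, ∑ k : Fin n, ∑ l : Fin n, ((T j k l : ℂ)) • (γ j * γ k * γ l) := by
    rw [Finset.sum_comm]
    refine Finset.sum_congr rfl fun k _ => ?_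
    rw [Finset.sum_comm]
    refine Finset.sum_congr rfl fun l _ => ?_
    refine Finset.sum_congr rfl fun c _ => ?_
    have hc : ((T c k l : ℝ) : ℂ) = ((T k l c : ℝ) : ℂ) := by
      rw [hT1 c k l, hT2 k c l]; push_cast; ring
    rw [hc]
  rw [reindex]
  congr 1
  ring

lemma hS2 (B₀ : Matrix (Fin N) (Fin N) ℂ)
    (hB : B₀ = (-(Complex.I / 8)) •
      ∑ j : Fin n, ∑ k : Fin n, ∑ l : Fin n, ((T j k l : ℂ)) • (γ j * γ k * γ l)) :
    ∑ c : Fin n, γ c * acomm (γ c) B₀ = (6:ℂ) • B₀ := by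
  have h := hA γ hγ T hT1 hT2 B₀ hB
  simp only [h, mul_smul_comm, Finset.mul_sum]
  rw [← Finset.smul_sum, hB, smul_smul]
  have reindex : (∑ c : Fin n, ∑ k : Fin n, ∑ l : Fin n, ((T c k l : ℂ)) • (γ c * (γ k * γ l)))
      = ∑ j : Fin n, ∑ k : Fin n, ∑ l : Fin n, ((T j k l : ℂ)) • (γ j * γ k * γ l) := by
    refine Finset.sum_congr rfl fun c _ => ?_
    refine Finset.sum_congr rfl fun k _ => ?_
    refine Finset.sum_congr rfl fun l _ => ?_
    rw [mul_assoc]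
  rw [reindex]
  congr 1
  ring

lemma trγB0 (B₀ : Matrix (Fin N) (Fin N) ℂ)
    (hB : B₀ = (-(Complex.I / 8)) •
      ∑ j : Fin n, ∑ k : Fin n, ∑ l : Fin n, ((T j k l : ℂ)) • (γ j * γ k * γ l))
    (l : Fin n) :
    Matrix.trace (γ l * B₀) = 0 := by
  have hT_kk : ∀ j k : Fin n, T j k k = 0 := fun j k => by have := hT2 j k k; linarith
  have hT_jj : ∀ j k : Fin n, T j j k = 0 := fun j k => by have := hT1 j j k; linarith
  have hT_jkj : ∀ j k : Fin n, T j k j = 0 := fun j k => by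
    have h1 := hT2 j k j; have h2 := hT_jj j k; linarith
  rw [hB, mul_smul_comm, trace_smul]
  have expand : γ l * (∑ j : Fin n, ∑ k : Fin n, ∑ m : Fin n, ((T j k m : ℂ)) • (γ j * γ k * γ m))
      = ∑ j : Fin n, ∑ k : Fin n, ∑ m : Fin n, ((T j k m : ℂ)) • (γ l * γ j * (γ k * γ m)) := by
    simp only [Finset.mul_sum, mul_smul_comm]
    refine Finset.sum_congr rfl fun j _ => ?_
    refine Finset.sum_congr rfl fun k _ => ?_
    refine Finset.sum_congr rfl fun m _ => ?_
    congr 1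
    noncomm_ring
  rw [expand]
  simp only [trace_sum, trace_smul, tr4 γ hγ, smul_eq_mul]
  simp [mul_ite, ite_mul, mul_zero, zero_mul, mul_one, one_mul, mul_sub, mul_add,
    sub_mul, add_mul, Finset.sum_sub_distrib, Finset.sum_add_distrib, Finset.sum_ite_eq,
    Finset.sum_ite_eq', hT_kk, hT_jj, hT_jkj]

lemma quad (c d : Fin n) :
    (∑ k : Fin n, ∑ l : Fin n, ∑ p : Fin n, ∑ q : Fin n,
      (T c k l : ℂ) * (T d p q : ℂ) *
        ((if k = l then (1:ℂ) else 0) * (if p = q then (1:ℂ) else 0)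
          - (if k = p then (1:ℂ) else 0) * (if l = q then (1:ℂ) else 0)
          + (if k = q then (1:ℂ) else 0) * (if l = p then (1:ℂ) else 0)))
      = -2 * ∑ k : Fin n, ∑ l : Fin n, (T c k l : ℂ) * (T d k l : ℂ) := by
  have hT_kk : ∀ j k : Fin n, T j k k = 0 := fun j k => by have := hT2 j k k; linarith
  simp only [mul_sub, mul_add, Finset.sum_sub_distrib, Finset.sum_add_distrib]
  have hSA : (∑ k : Fin n, ∑ l : Fin n, ∑ p : Fin n, ∑ q : Fin n,
      (T c k l : ℂ) * (T d p q : ℂ) * ((if k = l then (1:ℂ) else 0) * (if p = q then (1:ℂ) else 0)))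
      = 0 := by
    simp [mul_ite, ite_mul, mul_zero, zero_mul, mul_one, Finset.sum_ite_eq, hT_kk]
  have hSB : (∑ k : Fin n, ∑ l : Fin n, ∑ p : Fin n, ∑ q : Fin n,
      (T c k l : ℂ) * (T d p q : ℂ) * ((if k = p then (1:ℂ) else 0) * (if l = q then (1:ℂ) else 0)))
      = ∑ k : Fin n, ∑ l : Fin n, (T c k l : ℂ) * (T d k l : ℂ) := by
    simp [mul_ite, ite_mul, mul_zero, zero_mul, mul_one, Finset.sum_ite_eq]
  have hSC : (∑ k : Fin n, ∑ l : Fin n, ∑ p : Fin n, ∑ q : Fin n,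
      (T c k l : ℂ) * (T d p q : ℂ) * ((if k = q then (1:ℂ) else 0) * (if l = p then (1:ℂ) else 0)))
      = -∑ k : Fin n, ∑ l : Fin n, (T c k l : ℂ) * (T d k l : ℂ) := by
    have step : (∑ k : Fin n, ∑ l : Fin n, ∑ p : Fin n, ∑ q : Fin n,
        (T c k l : ℂ) * (T d p q : ℂ) * ((if k = q then (1:ℂ) else 0) * (if l = p then (1:ℂ) else 0)))
        = ∑ k : Fin n, ∑ l : Fin n, (T c k l : ℂ) * (T d l k : ℂ) := by
      simp [mul_ite, ite_mul, mul_zero, zero_mul, mul_one, Finset.sum_ite_eq]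
    rw [step, ← Finset.sum_neg_distrib]
    refine Finset.sum_congr rfl fun k _ => ?_
    rw [← Finset.sum_neg_distrib]
    refine Finset.sum_congr rfl fun l _ => ?_
    have hsw : ((T d l k : ℝ) : ℂ) = -((T d k l : ℝ) : ℂ) := by
      rw [hT2 d l k]; push_cast; ring
    rw [hsw]; ring
  rw [hSA, hSB, hSC]
  ring

lemma trAA (B₀ : Matrix (Fin N) (Fin N) ℂ)
    (hB : B₀ = (-(Complex.I / 8)) •
      ∑ j : Fin n, ∑ k : Fin n, ∑ l : Fin n, ((T j k l : ℂ)) • (γ j * γ k * γ l))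
    (c d : Fin n) :
    Matrix.trace (acomm (γ c) B₀ * acomm (γ d) B₀)
      = (9/8) * (∑ k : Fin n, ∑ l : Fin n, (T c k l : ℂ) * (T d k l : ℂ))
          * Matrix.trace (1 : Matrix (Fin N) (Fin N) ℂ) := by
  rw [hA γ hγ T hT1 hT2 B₀ hB c, hA γ hγ T hT1 hT2 B₀ hB d]
  rw [smul_mul_assoc, mul_smul_comm, smul_smul, trace_smul]
  have expand : (∑ k : Fin n, ∑ l : Fin n, ((T c k l : ℂ)) • (γ k * γ l)) *
        (∑ p : Fin n, ∑ q : Fin n, ((T d p q : ℂ)) • (γ p * γ q))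
      = ∑ k : Fin n, ∑ l : Fin n, ∑ p : Fin n, ∑ q : Fin n,
          ((T c k l : ℂ) * (T d p q : ℂ)) • (γ k * γ l * (γ p * γ q)) := by
    rw [Finset.sum_mul]
    refine Finset.sum_congr rfl fun k _ => ?_
    rw [Finset.sum_mul]
    refine Finset.sum_congr rfl fun l _ => ?_
    simp only [smul_mul_assoc, Finset.mul_sum, mul_smul_comm, smul_smul, Finset.smul_sum]
    refine Finset.sum_congr rfl fun p _ => ?_
    refine Finset.sum_congr rfl fun q _ => ?_
    rw [mul_comm]
  rw [expand]
  simp only [trace_sum, trace_smul, tr4 γ hγ, smul_eq_mul]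
  have factor : (∑ k : Fin n, ∑ l : Fin n, ∑ p : Fin n, ∑ q : Fin n,
      (T c k l : ℂ) * (T d p q : ℂ) *
        (((if k = l then (1:ℂ) else 0) * (if p = q then (1:ℂ) else 0)
          - (if k = p then (1:ℂ) else 0) * (if l = q then (1:ℂ) else 0)
          + (if k = q then (1:ℂ) else 0) * (if l = p then (1:ℂ) else 0))
          * Matrix.trace (1 : Matrix (Fin N) (Fin N) ℂ)))
      = (∑ k : Fin n, ∑ l : Fin n, ∑ p : Fin n, ∑ q : Fin n,
      (T c k l : ℂ) * (T d p q : ℂ) *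
        ((if k = l then (1:ℂ) else 0) * (if p = q then (1:ℂ) else 0)
          - (if k = p then (1:ℂ) else 0) * (if l = q then (1:ℂ) else 0)
          + (if k = q then (1:ℂ) else 0) * (if l = p then (1:ℂ) else 0)))
        * Matrix.trace (1 : Matrix (Fin N) (Fin N) ℂ) := by
    simp only [Finset.sum_mul, mul_assoc]
  rw [factor, quad γ hγ T hT1 hT2 c d]
  linear_combination (-(9/8) * (∑ k : Fin n, ∑ l : Fin n, (T c k l : ℂ) * (T d k l : ℂ))
    * Matrix.trace (1 : Matrix (Fin N) (Fin N) ℂ)) * Complex.I_sq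

lemma hComm (B₀ : Matrix (Fin N) (Fin N) ℂ)
    (hB : B₀ = (-(Complex.I / 8)) •
      ∑ j : Fin n, ∑ k : Fin n, ∑ l : Fin n, ((T j k l : ℂ)) • (γ j * γ k * γ l))
    (a b : Fin n) :
    γ a * acomm (γ b) B₀ = acomm (γ b) B₀ * γ a
      + (-(3*Complex.I)) • ∑ l : Fin n, ((T b a l : ℂ)) • γ l := by
  rw [hA γ hγ T hT1 hT2 B₀ hB b]
  have key : γ a * (∑ k : Fin n, ∑ l : Fin n, ((T b k l : ℂ)) • (γ k * γ l))
      - (∑ k : Fin n, ∑ l : Fin n, ((T b k l : ℂ)) • (γ k * γ l)) * γ a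
      = (4:ℂ) • ∑ l : Fin n, ((T b a l : ℂ)) • γ l := by
    have expand : γ a * (∑ k : Fin n, ∑ l : Fin n, ((T b k l : ℂ)) • (γ k * γ l))
        - (∑ k : Fin n, ∑ l : Fin n, ((T b k l : ℂ)) • (γ k * γ l)) * γ a
        = ∑ k : Fin n, ∑ l : Fin n, ((T b k l : ℂ)) •
            (γ a * (γ k * γ l) - γ k * γ l * γ a) := by
      simp only [Finset.mul_sum, Finset.sum_mul, mul_smul_comm, smul_mul_assoc, smul_sub,
        ← Finset.sum_sub_distrib]
    rw [expand]
    have step : ∀ k l : Fin n, ((T b k l : ℂ)) • (γ a * (γ k * γ l) - γ k * γ l * γ a)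
        = (if a = k then ((2:ℂ) * (T b k l : ℂ)) • γ l else 0)
          - (if a = l then ((2:ℂ) * (T b k l : ℂ)) • γ k else 0) := by
      intro k l
      rw [comm2 γ hγ a k l]
      split_ifs <;> simp [smul_sub, smul_smul] <;> module
    simp only [step, Finset.sum_sub_distrib]
    have e1 : (∑ k : Fin n, ∑ l : Fin n, (if a = k then ((2:ℂ) * (T b k l : ℂ)) • γ l else 0))
        = ∑ l : Fin n, ((2:ℂ) * (T b a l : ℂ)) • γ l := by
      rw [Finset.sum_comm]
      refine Finset.sum_congr rfl fun l _ => ?_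
      simp
    have e2 : (∑ k : Fin n, ∑ l : Fin n, (if a = l then ((2:ℂ) * (T b k l : ℂ)) • γ k else 0))
        = ∑ k : Fin n, ((2:ℂ) * (T b k a : ℂ)) • γ k := by
      refine Finset.sum_congr rfl fun k _ => ?_
      simp
    rw [e1, e2]
    have comb : (∑ x : Fin n, ((2:ℂ) * (T b a x : ℂ)) • γ x)
        - (∑ x : Fin n, ((2:ℂ) * (T b x a : ℂ)) • γ x)
        = ∑ x : Fin n, (((2:ℂ) * (T b a x : ℂ)) • γ x - ((2:ℂ) * (T b x a : ℂ)) • γ x) := by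
      rw [Finset.sum_sub_distrib]
    rw [comb, Finset.smul_sum]
    refine Finset.sum_congr rfl fun x _ => ?_
    have hsw : ((T b x a : ℝ) : ℂ) = -((T b a x : ℝ) : ℂ) := by
      rw [hT2 b x a]; push_cast; ring
    rw [hsw]
    match_scalars
    ring
  have key' : γ a * (∑ k : Fin n, ∑ l : Fin n, ((T b k l : ℂ)) • (γ k * γ l))
      = (∑ k : Fin n, ∑ l : Fin n, ((T b k l : ℂ)) • (γ k * γ l)) * γ a
        + (4:ℂ) • ∑ l : Fin n, ((T b a l : ℂ)) • γ l := by
    rw [← key]; abel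
  rw [mul_smul_comm, key', smul_add, smul_smul, smul_mul_assoc]
  congr 1
  congr 1
  ring

end

theorem stmt_15 (n N : ℕ) (hn : 0 < n) (hN : 0 < N)
    (γ : Fin n → Matrix (Fin N) (Fin N) ℂ)
    (hγ : ∀ a b : Fin n, γ a * γ b + γ b * γ a
      = (2 * if a = b then (1:ℂ) else 0) • (1 : Matrix (Fin N) (Fin N) ℂ))
    (T : Fin n → Fin n → Fin n → ℝ)
    (hT1 : ∀ j k l : Fin n, T j k l = - T k j l)
    (hT2 : ∀ j k l : Fin n, T j k l = - T j l k)
    (B₀ : Matrix (Fin N) (Fin N) ℂ)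
    (hB : B₀ = (-(Complex.I / 8)) •
      ∑ j : Fin n, ∑ k : Fin n, ∑ l : Fin n, ((T j k l : ℂ)) • (γ j * γ k * γ l))
    (a b : Fin n) :
    Matrix.trace (((if a = b then (1:ℂ) else 0) • B₀ - γ a * acomm (γ b) B₀)
        * (∑ c : Fin n, acomm (γ c) B₀ * γ c - (2:ℂ) • B₀))
      = (3 / 8) * Matrix.trace (1 : Matrix (Fin N) (Fin N) ℂ)
        * ((if a = b then (1:ℂ) else 0)
            * ∑ i : Fin n, ∑ j : Fin n, ∑ k : Fin n, ((T i j k : ℂ)) ^ 2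
          - 6 * ∑ j : Fin n, ∑ k : Fin n, ((T a j k : ℂ)) * ((T b j k : ℂ))) := by
  have hS1' := hS1 γ hγ T hT1 hT2 B₀ hB
  have hS2' := hS2 γ hγ T hT1 hT2 B₀ hB
  have hAA := trAA γ hγ T hT1 hT2 B₀ hB
  have htr0 := trγB0 γ hγ T hT1 hT2 B₀ hB
  have hgb : ∀ c : Fin n, γ c * B₀ = acomm (γ c) B₀ - B₀ * γ c := by
    intro c
    have : γ c * B₀ + B₀ * γ c = acomm (γ c) B₀ := rfl
    exact eq_sub_of_add_eq this
  -- second factor equals 4 • B₀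
  have hfac : (∑ c : Fin n, acomm (γ c) B₀ * γ c) - (2:ℂ) • B₀ = (4:ℂ) • B₀ := by
    rw [hS1', ← sub_smul]; norm_num
  rw [hfac]
  -- key fact 1 : 2 * X = trace (A_a A_b)
  have hX : 2 * Matrix.trace (γ a * acomm (γ b) B₀ * B₀)
      = Matrix.trace (acomm (γ a) B₀ * acomm (γ b) B₀) := by
    have hc := hComm γ hγ T hT1 hT2 B₀ hB a b
    have e1 : Matrix.trace (γ a * acomm (γ b) B₀ * B₀)
        = Matrix.trace (acomm (γ b) B₀ * γ a * B₀)
          + (-(3*Complex.I)) * Matrix.trace ((∑ l : Fin n, ((T b a l : ℂ)) • γ l) * B₀) := by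
      rw [hc, add_mul, trace_add, smul_mul_assoc, trace_smul, smul_eq_mul]
    have hDB : Matrix.trace ((∑ l : Fin n, ((T b a l : ℂ)) • γ l) * B₀) = 0 := by
      rw [Finset.sum_mul, trace_sum]
      refine Finset.sum_eq_zero fun l _ => ?_
      rw [smul_mul_assoc, trace_smul, htr0 l]
      simp
    have e2 : Matrix.trace (acomm (γ b) B₀ * γ a * B₀)
        = Matrix.trace (acomm (γ a) B₀ * acomm (γ b) B₀)
          - Matrix.trace (γ a * acomm (γ b) B₀ * B₀) := by
      calc Matrix.trace (acomm (γ b) B₀ * γ a * B₀)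
          = Matrix.trace (acomm (γ b) B₀ * (γ a * B₀)) := by rw [mul_assoc]
        _ = Matrix.trace (γ a * B₀ * acomm (γ b) B₀) := by rw [trace_mul_comm]
        _ = Matrix.trace ((acomm (γ a) B₀ - B₀ * γ a) * acomm (γ b) B₀) := by rw [hgb a]
        _ = Matrix.trace (acomm (γ a) B₀ * acomm (γ b) B₀)
            - Matrix.trace (B₀ * γ a * acomm (γ b) B₀) := by rw [sub_mul, trace_sub]
        _ = _ := by
            congr 1
            rw [mul_assoc, trace_mul_comm]
    linear_combination e1 + e2 + (-(3*Complex.I)) * hDB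
  -- key fact 2 : 12 * trace (B₀ B₀) = ∑ trace (A_c A_c)
  have hB2 : 12 * Matrix.trace (B₀ * B₀)
      = ∑ c : Fin n, Matrix.trace (acomm (γ c) B₀ * acomm (γ c) B₀) := by
    have h1 : Matrix.trace (B₀ * ((6:ℂ) • B₀))
        = ∑ c : Fin n, Matrix.trace (B₀ * (acomm (γ c) B₀ * γ c)) := by
      rw [← hS1', Finset.mul_sum, trace_sum]
    have h2 : ∀ c : Fin n, Matrix.trace (B₀ * (acomm (γ c) B₀ * γ c))
        = Matrix.trace (acomm (γ c) B₀ * acomm (γ c) B₀)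
          - Matrix.trace (B₀ * (γ c * acomm (γ c) B₀)) := by
      intro c
      calc Matrix.trace (B₀ * (acomm (γ c) B₀ * γ c))
          = Matrix.trace (B₀ * acomm (γ c) B₀ * γ c) := by rw [mul_assoc]
        _ = Matrix.trace (γ c * (B₀ * acomm (γ c) B₀)) := by rw [trace_mul_comm]
        _ = Matrix.trace (γ c * B₀ * acomm (γ c) B₀) := by rw [mul_assoc]
        _ = Matrix.trace ((acomm (γ c) B₀ - B₀ * γ c) * acomm (γ c) B₀) := by rw [hgb c]
        _ = _ := by rw [sub_mul, trace_sub, mul_assoc]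
    have h3 : ∑ c : Fin n, Matrix.trace (B₀ * (γ c * acomm (γ c) B₀))
        = Matrix.trace (B₀ * ((6:ℂ) • B₀)) := by
      rw [← trace_sum, ← Finset.mul_sum, hS2']
    have h4 : Matrix.trace (B₀ * ((6:ℂ) • B₀)) = 6 * Matrix.trace (B₀ * B₀) := by
      rw [mul_smul_comm, trace_smul, smul_eq_mul]
    have h5 := h1
    simp only [h2] at h5
    rw [Finset.sum_sub_distrib, h3] at h5
    rw [h4] at h5
    linear_combination h5
  have hsum : ∑ c : Fin n, Matrix.trace (acomm (γ c) B₀ * acomm (γ c) B₀)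
      = 9/8 * (∑ c : Fin n, ∑ k : Fin n, ∑ l : Fin n, (T c k l : ℂ) * (T c k l : ℂ))
          * Matrix.trace (1 : Matrix (Fin N) (Fin N) ℂ) := by
    simp only [hAA]
    rw [← Finset.sum_mul, ← Finset.mul_sum]
  have hpw : (∑ i : Fin n, ∑ j : Fin n, ∑ k : Fin n, ((T i j k : ℂ)) ^ 2)
      = ∑ i : Fin n, ∑ j : Fin n, ∑ k : Fin n, (T i j k : ℂ) * (T i j k : ℂ) := by
    refine Finset.sum_congr rfl fun i _ => ?_
    refine Finset.sum_congr rfl fun j _ => ?_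
    refine Finset.sum_congr rfl fun k _ => ?_
    ring
  rw [hpw]
  rw [mul_smul_comm, trace_smul, sub_mul, trace_sub, smul_mul_assoc, trace_smul,
    smul_eq_mul, smul_eq_mul]
  have hXX : 2 * Matrix.trace (γ a * acomm (γ b) B₀ * B₀)
      = 9/8 * (∑ k : Fin n, ∑ l : Fin n, (T a k l : ℂ) * (T b k l : ℂ))
          * Matrix.trace (1 : Matrix (Fin N) (Fin N) ℂ) := by
    rw [hX, hAA a b]
  have hBB : 12 * Matrix.trace (B₀ * B₀)
      = 9/8 * (∑ c : Fin n, ∑ k : Fin n, ∑ l : Fin n, (T c k l : ℂ) * (T c k l : ℂ))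
          * Matrix.trace (1 : Matrix (Fin N) (Fin N) ℂ) := by
    rw [hB2, hsum]
  linear_combination ((if a = b then (1:ℂ) else 0)/3) * hBB + (-2) * hXX
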